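/- Let H be a real Hilbert space, T : H → Set H a monotone set-valued operator with nonempty domain, and D : H → H a monotone, Fréchet differentiable map whose derivative D' is m-Lipschitz continuous in operator norm (m ≥ 0). Let (s^k) and (u^k) be bounded sequences in H and (ρ^k) a bounded sequence of strictly positive reals. If a sequence (x^k) in H satisfies, for each k, the resolvent inclusion s^k − x^k ∈ ρ^k (T(x^k) + D_{(u^k)}(x^k)), i.e. x^k = J_{ρ^k (T + D_{(u^k)})}(s^k), then (x^k) is bounded. -/

import Mathlib

open scoped RealInnerProductSpace

lemma psd_of_monotone {H : Type*} [NormedAddCommGroup H] [InnerProductSpace ℝ H]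
    (D : H → H) (D' : H → H →L[ℝ] H) (hD : ∀ x, HasFDerivAt D (D' x) x)
    (hDmono : ∀ x y, 0 ≤ ⟪x - y, D x - D y⟫) (v h : H) : 0 ≤ ⟪h, D' v h⟫ := by
  have hline : HasDerivAt (fun t : ℝ => v + t • h) h 0 := by
    simpa using ((hasDerivAt_id (0:ℝ)).smul_const h).const_add v
  have hcomp : HasDerivAt (fun t : ℝ => D (v + t • h)) (D' v h) 0 := by
    have := (hD (v + (0:ℝ) • h)).comp_hasDerivAt 0 hline
    simpa [Function.comp_def] using this
  have hφ : HasDerivAt (fun t : ℝ => ⟪h, D (v + t • h)⟫) ⟪h, D' v h⟫ 0 := by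
    have := (hasDerivAt_const (0:ℝ) h).inner ℝ hcomp
    simpa using this
  rw [hasDerivAt_iff_tendsto_slope] at hφ
  have hφ' := hφ.mono_left (nhdsWithin_mono _ (fun t ht => ne_of_gt ht : Set.Ioi (0:ℝ) ⊆ {0}ᶜ))
  refine ge_of_tendsto hφ' ?_
  filter_upwards [self_mem_nhdsWithin] with t (ht : 0 < t)
  have h1 : 0 ≤ ⟪(v + t • h) - v, D (v + t • h) - D v⟫ := hDmono _ _
  have h2 : (v + t • h) - v = t • h := by abel
  rw [h2, inner_smul_left, inner_sub_right] at h1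
  have h3 : 0 ≤ ⟪h, D (v + t • h)⟫ - ⟪h, D v⟫ := by
    simp only [starRingEnd_apply, star_trivial] at h1
    nlinarith
  have : slope (fun t : ℝ => ⟪h, D (v + t • h)⟫) 0 t
      = (⟪h, D (v + t • h)⟫ - ⟪h, D (v + (0:ℝ) • h)⟫) / t := by
    simp [slope_def_field]
  rw [this]
  simp only [zero_smul, add_zero]
  positivity


/-- Let `T` be a monotone set-valued operator with nonempty domain and `D`
a monotone Fréchet differentiable map with `m`-Lipschitz derivative. If `(sᵏ)`, `(uᵏ)` are
bounded, `(ρᵏ)` is bounded and strictly positive, and `xᵏ = J_{ρᵏ(T + D_{(uᵏ)})}(sᵏ)` for all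
`k`, then `(xᵏ)` is bounded. -/
theorem bounded_of_resolvent_linearization {H : Type*} [NormedAddCommGroup H]
    [InnerProductSpace ℝ H]
    (T : H → Set H)
    (hT : ∀ x y u v, u ∈ T x → v ∈ T y → 0 ≤ ⟪x - y, u - v⟫)
    (hdom : ∃ x, (T x).Nonempty)
    (D : H → H) (D' : H → H →L[ℝ] H) (hD : ∀ x, HasFDerivAt D (D' x) x)
    (hDmono : ∀ x y, 0 ≤ ⟪x - y, D x - D y⟫)
    (m : ℝ) (hm : 0 ≤ m) (hlip : ∀ x y, ‖D' x - D' y‖ ≤ m * ‖x - y‖)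
    (s u : ℕ → H) (ρ : ℕ → ℝ)
    (hs : ∃ M, ∀ k, ‖s k‖ ≤ M) (hu : ∃ M, ∀ k, ‖u k‖ ≤ M)
    (hρpos : ∀ k, 0 < ρ k) (hρbd : ∃ R, ∀ k, ρ k ≤ R)
    (x : ℕ → H)
    (hx : ∀ k, ∃ t ∈ T (x k), s k - x k = ρ k • (t + (D (u k) + D' (u k) (x k - u k)))) :
    ∃ M, ∀ k, ‖x k‖ ≤ M := by
  obtain ⟨x₀, t₀, ht₀⟩ := hdom
  obtain ⟨Ms, hMs⟩ := hs
  obtain ⟨Mu, hMu⟩ := hu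
  obtain ⟨R, hR⟩ := hρbd
  have hMu0 : 0 ≤ Mu := le_trans (norm_nonneg _) (hMu 0)
  have hR0 : 0 ≤ R := le_trans (hρpos 0).le (hR 0)
  -- bound on ‖D' (u k)‖
  set C1 : ℝ := ‖D' 0‖ + m * Mu with hC1def
  have hC10 : 0 ≤ C1 := by positivity
  have hD'bd : ∀ z : H, ‖z‖ ≤ Mu → ‖D' z‖ ≤ C1 := by
    intro z hz
    have := hlip z 0
    have h2 : ‖D' z‖ - ‖D' 0‖ ≤ m * ‖z - 0‖ := le_trans (norm_sub_norm_le _ _) this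
    rw [sub_zero] at h2
    nlinarith [mul_le_mul_of_nonneg_left hz hm]
  -- bound on ‖D (u k)‖ via MVT
  have hDbd : ∀ z : H, ‖z‖ ≤ Mu → ‖D z‖ ≤ ‖D 0‖ + C1 * Mu := by
    intro z hz
    have hconv : Convex ℝ (Metric.closedBall (0:H) Mu) := convex_closedBall _ _
    have hmvt := hconv.norm_image_sub_le_of_norm_hasFDerivWithin_le
      (f := D) (f' := D') (C := C1)
      (fun y hy => (hD y).hasFDerivWithinAt)
      (fun y hy => hD'bd y (by simpa [Metric.mem_closedBall, dist_eq_norm] using hy))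
      (Metric.mem_closedBall_self hMu0)
      (Metric.mem_closedBall.2 (by simpa [dist_eq_norm] using hz))
    have : ‖D z - D 0‖ ≤ C1 * Mu := by
      calc ‖D z - D 0‖ ≤ C1 * ‖z - 0‖ := hmvt
        _ ≤ C1 * Mu := by rw [sub_zero]; exact mul_le_mul_of_nonneg_left hz hC10
    have h4 : ‖D z‖ - ‖D 0‖ ≤ C1 * Mu := le_trans (norm_sub_norm_le _ _) this
    linarith
  set W : ℝ := ‖t₀‖ + (‖D 0‖ + C1 * Mu) + C1 * (‖x₀‖ + Mu) with hWdef
  have hW0 : 0 ≤ W := by positivity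
  refine ⟨‖x₀‖ + (Ms + ‖x₀‖) + R * W, fun k => ?_⟩
  obtain ⟨t, htT, heq⟩ := hx k
  set d := x k - x₀ with hddef
  set w : H := t₀ + D (u k) + D' (u k) (x₀ - u k) with hwdef
  have hwbd : ‖w‖ ≤ W := by
    calc ‖w‖ ≤ ‖t₀‖ + ‖D (u k)‖ + ‖D' (u k) (x₀ - u k)‖ := by
          rw [hwdef]; exact norm_add₃_le
      _ ≤ W := by
          have h1 : ‖D (u k)‖ ≤ ‖D 0‖ + C1 * Mu := hDbd _ (hMu k)
          have h2 : ‖D' (u k) (x₀ - u k)‖ ≤ C1 * (‖x₀‖ + Mu) := by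
            calc ‖D' (u k) (x₀ - u k)‖ ≤ ‖D' (u k)‖ * ‖x₀ - u k‖ :=
                  (D' (u k)).le_opNorm _
              _ ≤ C1 * (‖x₀‖ + Mu) := by
                  apply mul_le_mul (hD'bd _ (hMu k)) _ (norm_nonneg _) hC10
                  exact le_trans (norm_sub_le _ _) (by linarith [hMu k])
          rw [hWdef]; linarith
  -- monotonicity facts
  have hmonoT : 0 ≤ ⟪d, t - t₀⟫ := hT _ _ _ _ htT ht₀
  have hpsd : 0 ≤ ⟪d, D' (u k) d⟫ := by
    have := psd_of_monotone D D' hD hDmono (u k) d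
    exact (real_inner_comm d (D' (u k) d)) ▸ (by simpa [real_inner_comm] using this)
  -- key inner-product identity
  have hinner : ⟪d, s k - x k⟫ = ρ k * ⟪d, t + (D (u k) + D' (u k) (x k - u k))⟫ := by
    rw [heq, real_inner_smul_right]
  have hsplit : ⟪d, t + (D (u k) + D' (u k) (x k - u k))⟫
      = ⟪d, t - t₀⟫ + ⟪d, D' (u k) d⟫ + ⟪d, w⟫ := by
    have harg : x k - u k = d + (x₀ - u k) := by rw [hddef]; abel
    rw [harg, map_add]
    rw [hwdef]
    simp only [inner_add_right, inner_sub_right]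
    ring
  have hlow : ρ k * ⟪d, w⟫ ≤ ⟪d, s k - x k⟫ := by
    rw [hinner, hsplit]
    have : ⟪d, w⟫ ≤ ⟪d, t - t₀⟫ + ⟪d, D' (u k) d⟫ + ⟪d, w⟫ := by linarith
    exact mul_le_mul_of_nonneg_left this (hρpos k).le
  -- ‖d‖² ≤ ‖d‖ * (‖s k - x₀‖ + ρ k * ‖w‖)
  have hid : ⟪d, s k - x k⟫ = ⟪d, s k - x₀⟫ - ‖d‖ ^ 2 := by
    have : s k - x k = (s k - x₀) - d := by rw [hddef]; abel
    rw [this, inner_sub_right, real_inner_self_eq_norm_sq]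
  have hsq : ‖d‖ ^ 2 ≤ ‖d‖ * (‖s k - x₀‖ + ρ k * ‖w‖) := by
    have h1 : ⟪d, s k - x₀⟫ ≤ ‖d‖ * ‖s k - x₀‖ := real_inner_le_norm _ _
    have h2 : -(‖d‖ * ‖w‖) ≤ ⟪d, w⟫ := by
      have := abs_real_inner_le_norm d w
      have := abs_le.mp this
      linarith [this.1]
    have h3 : -(ρ k * (‖d‖ * ‖w‖)) ≤ ρ k * ⟪d, w⟫ :=
      by nlinarith [(hρpos k).le]
    have h4 : ‖d‖ ^ 2 ≤ ⟪d, s k - x₀⟫ - ρ k * ⟪d, w⟫ := by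
      have := hlow
      rw [hid] at this
      linarith
    nlinarith
  have hdbd : ‖d‖ ≤ ‖s k - x₀‖ + ρ k * ‖w‖ := by
    rcases eq_or_lt_of_le (norm_nonneg d) with h0 | h0
    · rw [← h0]; exact add_nonneg (norm_nonneg _) (mul_nonneg (hρpos k).le (norm_nonneg _))
    · have := hsq
      rw [sq] at this
      exact le_of_mul_le_mul_left this h0
  have hrhs : ‖s k - x₀‖ + ρ k * ‖w‖ ≤ (Ms + ‖x₀‖) + R * W := by
    have h1 : ‖s k - x₀‖ ≤ Ms + ‖x₀‖ := le_trans (norm_sub_le _ _) (by linarith [hMs k])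
    have h2 : ρ k * ‖w‖ ≤ R * W := by
      apply mul_le_mul (hR k) hwbd (norm_nonneg _) hR0
    linarith
  calc ‖x k‖ = ‖d + x₀‖ := by rw [hddef]; congr 1; abel
    _ ≤ ‖d‖ + ‖x₀‖ := norm_add_le _ _
    _ ≤ ‖x₀‖ + (Ms + ‖x₀‖) + R * W := by linarith [le_trans hdbd hrhs]
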